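/- arXiv:1202.6678 — 2 statements merged into one kernel-verified Lean document; each statement's English description precedes it below -/
import Mathlib

section
/- Under assumption (H), let μ and μ' be probability measures on X, N ≥ 1, n ≥ 0, and let κ be a Markov kernel from X^N to X satisfying ∫ κ(ζ, A) μ^{⊗N}(dζ) = μ'(A) for every measurable A. For a trajectory (ζ_0,…,ζ_n) ∈ (X^N)^{n+1}, build the kernels Q_p (1 ≤ p ≤ n) from the empirical measures η_p := m(ζ_p) as in the context, and set F(ζ_0,…,ζ_n) := ∫ κ(ζ_0,dx) (Q_1Q_2⋯Q_n)(φ)(x) for a bounded measurable φ. Then E_N[F] = μ'Q^{(n)}(φ), where E_N is expectation under the law of the N-particle system over times 0,…,n started from μ. In particular, taking κ(ζ,·) := μ' constant, E_N[μ'Q_{0,n}(φ)] = μ'Q^{(n)}(φ). -/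
open MeasureTheory ProbabilityTheory Filter
open scoped ENNReal

/-- The operator `Q(φ)(x) = G(x) ∫ φ(y) M(x,dy)` associated with the kernel
`Q(x,dy) := G(x) M(x,dy)`. -/
noncomputable def Qop {X : Type*} [MeasurableSpace X] (G : X → ℝ) (M : Kernel X X)
    (φ : X → ℝ) (x : X) : ℝ :=
  G x * ∫ y, φ y ∂(M x)

/-- The `n`-fold iterate `Q^{(n)}` of the operator `Q`, `Q^{(0)} = Id`. -/
noncomputable def Qiter {X : Type*} [MeasurableSpace X] (G : X → ℝ) (M : Kernel X X) :
    ℕ → (X → ℝ) → X → ℝ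
  | 0 => fun φ => φ
  | n + 1 => fun φ => Qop G M (Qiter G M n φ)

/-- The random-flow kernel `Q_{p+1}(φ)(x) = ∫ [η_p(G) q(x,x') / ∫ q(y,x') η_p(dy)] φ(x') η_{p+1}(dx')`,
a version of `(dQ(x,·)/dΦ(η_p))(x') η_{p+1}(dx')` acting on functions. -/
noncomputable def QNop {X : Type*} [MeasurableSpace X] (G : X → ℝ) (q : X → X → ℝ)
    (η : ℕ → Measure X) (p : ℕ) (φ : X → ℝ) (x : X) : ℝ :=
  ∫ x', (∫ y, G y ∂(η p)) * q x x' / (∫ y, q y x' ∂(η p)) * φ x' ∂(η (p + 1))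

/-- `QNgap G q η p k = Q_{p,p+k} = Q_{p+1} Q_{p+2} ⋯ Q_{p+k}` acting on functions,
with `Q_{p,p} = Id`. -/
noncomputable def QNgap {X : Type*} [MeasurableSpace X] (G : X → ℝ) (q : X → X → ℝ)
    (η : ℕ → Measure X) : ℕ → ℕ → (X → ℝ) → X → ℝ
  | _, 0 => fun φ => φ
  | p, k + 1 => fun φ => QNop G q η p (QNgap G q η (p + 1) k φ)

/-- Empirical measure `m(ζ) = (1/N) Σ_i δ_{ζ^i}` of a particle configuration. -/
noncomputable def emp {X : Type*} [MeasurableSpace X] (N : ℕ) (ζ : Fin N → X) : Measure X :=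
  (N : ℝ≥0∞)⁻¹ • ∑ i : Fin N, Measure.dirac (ζ i)

/-- The normalized operator on measures `Φ(η) := ηQ / η(G)` where `Q(x,dy) = G(x) M(x,dy)`. -/
noncomputable def PhiM {X : Type*} [MeasurableSpace X] (G : X → ℝ) (M : Kernel X X)
    (η : Measure X) : Measure X :=
  (∫⁻ x, ENNReal.ofReal (G x) ∂η)⁻¹ •
    η.bind fun x => ENNReal.ofReal (G x) • (M x : Measure X)

/-- Expectation, under the law of the `N`-particle system
`m₀(dζ_0) ∏_{p=1}^{n} Φ(m(ζ_{p−1}))^{⊗N}(dζ_p)` with initial distribution `m₀` on `X^N`,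
of a functional `F` of the trajectory `(ζ_0, …, ζ_n)`. -/
noncomputable def Enn {X : Type*} [MeasurableSpace X] (G : X → ℝ) (M : Kernel X X) (N : ℕ) :
    (n : ℕ) → Measure (Fin N → X) → ((Fin (n + 1) → Fin N → X) → ℝ) → ℝ
  | 0, m0, F => ∫ ζ, F (fun _ => ζ) ∂m0
  | n + 1, m0, F => ∫ ζ, Enn G M N n
      (Measure.pi fun _ : Fin N => PhiM G M (emp N ζ))
      (fun traj => F (Fin.cons ζ traj)) ∂m0

/-- The sequence of empirical measures `p ↦ m(ζ_{p∧n})` read off a particle trajectory. -/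
noncomputable def etaOf {X : Type*} [MeasurableSpace X] (N n : ℕ)
    (traj : Fin (n + 1) → Fin N → X) (p : ℕ) : Measure X :=
  emp N (traj ⟨min p n, by omega⟩)

-- ### Auxiliary lemmas
section Aux

variable {X : Type*} [MeasurableSpace X]

lemma integrable_of_bdd {μ : Measure X} [IsFiniteMeasure μ] {f : X → ℝ} (hf : Measurable f)
    {C : ℝ} (hC : ∀ x, |f x| ≤ C) : Integrable f μ :=
  (integrable_const C).mono' hf.aestronglyMeasurable
    (Filter.Eventually.of_forall fun x => by simpa [Real.norm_eq_abs] using hC x)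

lemma emp_prob {N : ℕ} (hN : 1 ≤ N) (ζ : Fin N → X) : IsProbabilityMeasure (emp N ζ) := by
  constructor
  have hN' : (N : ℝ≥0∞) ≠ 0 := by exact Nat.cast_ne_zero.mpr (by omega)
  simp [emp, Measure.smul_apply, Measure.finset_sum_apply, ENNReal.inv_mul_cancel hN']

lemma lintegral_emp {N : ℕ} (ζ : Fin N → X) {f : X → ℝ≥0∞} (hf : Measurable f) :
    ∫⁻ x, f x ∂(emp N ζ) = (N : ℝ≥0∞)⁻¹ * ∑ i, f (ζ i) := by
  simp [emp, lintegral_smul_measure, lintegral_finset_sum_measure, lintegral_dirac' _ hf]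

lemma integrable_emp {N : ℕ} (hN : 1 ≤ N) (ζ : Fin N → X) {f : X → ℝ} (hf : Measurable f) :
    Integrable f (emp N ζ) := by
  refine ⟨hf.aestronglyMeasurable, ?_⟩
  rw [HasFiniteIntegral, lintegral_emp ζ (by measurability)]
  exact ENNReal.mul_lt_top (ENNReal.inv_lt_top.mpr (by exact_mod_cast hN)) (by simp [ENNReal.sum_lt_top])

lemma integral_emp {N : ℕ} (ζ : Fin N → X) {f : X → ℝ} (hf : Measurable f) :
    ∫ x, f x ∂(emp N ζ) = (N : ℝ)⁻¹ * ∑ i, f (ζ i) := by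
  have h1 : ∀ i : Fin N, Integrable f (Measure.dirac (ζ i)) := by
    intro i
    refine ⟨hf.aestronglyMeasurable, ?_⟩
    rw [HasFiniteIntegral, lintegral_dirac' _ (by measurability)]
    simp
  rw [emp, integral_smul_measure, integral_finset_sum_measure fun i _ => h1 i]
  simp [integral_dirac' _ _ hf.stronglyMeasurable, smul_eq_mul]

end Aux
section Aux2

variable {X : Type*} [MeasurableSpace X]
variable {G : X → ℝ} {M : Kernel X X} {ν : Measure X} {q : X → X → ℝ} {εm εp : ℝ}

lemma q_meas_left (hq_meas : Measurable fun p : X × X => q p.1 p.2) (x : X) :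
    Measurable fun y => q x y := hq_meas.comp measurable_prodMk_left

lemma q_meas_right (hq_meas : Measurable fun p : X × X => q p.1 p.2) (y : X) :
    Measurable fun x => q x y := hq_meas.comp measurable_prodMk_right

lemma smul_M_eq_withDensity
    (hH : ∀ x (A : Set X), MeasurableSet A →
      ENNReal.ofReal (G x) * M x A = ∫⁻ y in A, ENNReal.ofReal (q x y) ∂ν) (x : X) :
    (ENNReal.ofReal (G x)) • (M x : Measure X)
      = ν.withDensity fun y => ENNReal.ofReal (q x y) := by
  ext A hA
  rw [Measure.smul_apply, smul_eq_mul, hH x A hA, withDensity_apply _ hA]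

lemma integral_withDensity_ofReal {g : X → ℝ} (hg : Measurable g) (hg0 : ∀ y, 0 ≤ g y)
    (f : X → ℝ) :
    ∫ y, f y ∂(ν.withDensity fun y => ENNReal.ofReal (g y)) = ∫ y, g y * f y ∂ν := by
  have h : (fun y => ENNReal.ofReal (g y)) = fun y => ((g y).toNNReal : ℝ≥0∞) := rfl
  rw [h, integral_withDensity_eq_integral_smul hg.real_toNNReal f]
  refine integral_congr_ae (Filter.Eventually.of_forall fun y => ?_)
  simp [NNReal.smul_def, Real.coe_toNNReal _ (hg0 y)]

lemma Qop_eq_nu (hq_meas : Measurable fun p : X × X => q p.1 p.2)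
    (hq0 : ∀ x y, 0 ≤ q x y) (hG0 : ∀ x, 0 ≤ G x)
    (hH : ∀ x (A : Set X), MeasurableSet A →
      ENNReal.ofReal (G x) * M x A = ∫⁻ y in A, ENNReal.ofReal (q x y) ∂ν)
    (f : X → ℝ) (x : X) :
    Qop G M f x = ∫ y, q x y * f y ∂ν := by
  rw [← integral_withDensity_ofReal (q_meas_left hq_meas x) (hq0 x) f,
    ← smul_M_eq_withDensity hH x, integral_smul_measure, Qop]
  simp [ENNReal.toReal_ofReal (hG0 x), smul_eq_mul]

end Aux2
section Aux3

variable {X : Type*} [MeasurableSpace X]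
variable {G : X → ℝ} {M : Kernel X X} {ν : Measure X} {q : X → X → ℝ} {εm εp : ℝ}

lemma Sq_meas (hq_meas : Measurable fun p : X × X => q p.1 p.2)
    (η : Measure X) [SFinite η] :
    Measurable fun y => ∫ z, q z y ∂η :=
  (hq_meas.stronglyMeasurable.integral_prod_left').measurable

lemma q_integrable (hq_meas : Measurable fun p : X × X => q p.1 p.2)
    (hεm_pos : 0 < εm) (hq_lb : ∀ x y, εm ≤ q x y) (hq_ub : ∀ x y, q x y ≤ εp)
    (η : Measure X) [IsFiniteMeasure η] (y : X) : Integrable (fun z => q z y) η :=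
  integrable_of_bdd (q_meas_right hq_meas y) (C := εp)
    (fun z => abs_le.mpr ⟨by nlinarith [hq_lb z y, hq_ub z y], hq_ub z y⟩)

lemma G_integrable (hG_meas : Measurable G) (hG0 : ∀ x, 0 ≤ G x) {cG : ℝ}
    (hcG : ∀ x, G x ≤ cG) (η : Measure X) [IsFiniteMeasure η] : Integrable G η :=
  integrable_of_bdd hG_meas (C := max cG 0)
    (fun x => abs_le.mpr ⟨by nlinarith [hG0 x, le_max_right cG (0:ℝ)],
      le_max_of_le_left (hcG x)⟩)

lemma Sq_lb (hq_meas : Measurable fun p : X × X => q p.1 p.2)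
    (hεm_pos : 0 < εm) (hq_lb : ∀ x y, εm ≤ q x y) (hq_ub : ∀ x y, q x y ≤ εp)
    (η : Measure X) [IsProbabilityMeasure η] (y : X) : εm ≤ ∫ z, q z y ∂η := by
  have := integral_mono (integrable_const εm)
    (q_integrable hq_meas hεm_pos hq_lb hq_ub η y) (fun z => hq_lb z y)
  simpa using this

lemma SG_pos (hG_meas : Measurable G) (hG_pos : ∀ x, 0 < G x) {cG : ℝ}
    (hcG : ∀ x, G x ≤ cG) (η : Measure X) [IsProbabilityMeasure η] :
    0 < ∫ y, G y ∂η := by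
  rw [integral_pos_iff_support_of_nonneg_ae
    (Filter.Eventually.of_forall fun x => (hG_pos x).le)
    (G_integrable hG_meas (fun x => (hG_pos x).le) hcG η)]
  have : Function.support G = Set.univ := by
    ext x; simp [Function.support, (hG_pos x).ne']
  simp [this]

lemma SG_le (hG_meas : Measurable G) (hG0 : ∀ x, 0 ≤ G x) {cG : ℝ}
    (hcG : ∀ x, G x ≤ cG) (η : Measure X) [IsProbabilityMeasure η] :
    ∫ y, G y ∂η ≤ cG := by
  have := integral_mono (G_integrable hG_meas hG0 hcG η) (integrable_const cG) hcG
  simpa using this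

lemma phi_withDensity [IsMarkovKernel M] [SFinite ν]
    (hq_meas : Measurable fun p : X × X => q p.1 p.2)
    (hεm_pos : 0 < εm) (hq_lb : ∀ x y, εm ≤ q x y) (hq_ub : ∀ x y, q x y ≤ εp)
    (hG_meas : Measurable G) (hG0 : ∀ x, 0 ≤ G x)
    {cG : ℝ} (hcG : ∀ x, G x ≤ cG)
    (hH : ∀ x (A : Set X), MeasurableSet A →
      ENNReal.ofReal (G x) * M x A = ∫⁻ y in A, ENNReal.ofReal (q x y) ∂ν)
    (η : Measure X) [IsProbabilityMeasure η] :
    PhiM G M η = (ENNReal.ofReal (∫ y, G y ∂η))⁻¹ •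
      ν.withDensity fun y => ENNReal.ofReal (∫ z, q z y ∂η) := by
  have hGint : Integrable G η := G_integrable hG_meas hG0 hcG η
  have h1 : ∫⁻ x, ENNReal.ofReal (G x) ∂η = ENNReal.ofReal (∫ y, G y ∂η) :=
    (ofReal_integral_eq_lintegral_ofReal hGint
      (Filter.Eventually.of_forall hG0)).symm
  have hf_meas : Measurable fun x => ENNReal.ofReal (G x) • (M x : Measure X) := by
    apply Measure.measurable_of_measurable_coe
    intro s hs
    simp only [Measure.smul_apply, smul_eq_mul]
    exact (hG_meas.ennreal_ofReal).mul (M.measurable_coe hs)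
  rw [PhiM, h1]
  congr 1
  ext A hA
  rw [Measure.bind_apply hA hf_meas.aemeasurable, withDensity_apply _ hA]
  have h2 : ∀ x, (ENNReal.ofReal (G x) • (M x : Measure X)) A
      = ∫⁻ y in A, ENNReal.ofReal (q x y) ∂ν := by
    intro x
    rw [Measure.smul_apply, smul_eq_mul, hH x A hA]
  simp_rw [h2]
  rw [lintegral_lintegral_swap (hq_meas.ennreal_ofReal).aemeasurable]
  refine lintegral_congr_ae (Filter.Eventually.of_forall fun y => ?_)
  exact (ofReal_integral_eq_lintegral_ofReal
    (q_integrable hq_meas hεm_pos hq_lb hq_ub η y)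
    (Filter.Eventually.of_forall fun z => le_trans hεm_pos.le (hq_lb z y))).symm

end Aux3
section Aux4

variable {X : Type*} [MeasurableSpace X]
variable {G : X → ℝ} {M : Kernel X X} {ν : Measure X} {q : X → X → ℝ} {εm εp : ℝ}

lemma phi_prob [IsMarkovKernel M] [IsProbabilityMeasure ν]
    (hq_meas : Measurable fun p : X × X => q p.1 p.2)
    (hεm_pos : 0 < εm) (hq_lb : ∀ x y, εm ≤ q x y) (hq_ub : ∀ x y, q x y ≤ εp)
    (hG_meas : Measurable G) (hG_pos : ∀ x, 0 < G x)
    {cG : ℝ} (hcG : ∀ x, G x ≤ cG)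
    (hH : ∀ x (A : Set X), MeasurableSet A →
      ENNReal.ofReal (G x) * M x A = ∫⁻ y in A, ENNReal.ofReal (q x y) ∂ν)
    (η : Measure X) [IsProbabilityMeasure η] :
    IsProbabilityMeasure (PhiM G M η) := by
  have hG0 : ∀ x, 0 ≤ G x := fun x => (hG_pos x).le
  constructor
  rw [phi_withDensity hq_meas hεm_pos hq_lb hq_ub hG_meas hG0 hcG hH η,
    Measure.smul_apply, smul_eq_mul, withDensity_apply _ MeasurableSet.univ,
    Measure.restrict_univ]
  have h1 : ∀ y : X, ENNReal.ofReal (∫ z, q z y ∂η) = ∫⁻ z, ENNReal.ofReal (q z y) ∂η :=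
    fun y => ofReal_integral_eq_lintegral_ofReal
      (q_integrable hq_meas hεm_pos hq_lb hq_ub η y)
      (Filter.Eventually.of_forall fun z => le_trans hεm_pos.le (hq_lb z y))
  simp_rw [h1]
  rw [lintegral_lintegral_swap (((hq_meas.comp measurable_swap).ennreal_ofReal).aemeasurable)]
  have h2 : ∀ z : X, ∫⁻ y, ENNReal.ofReal (q z y) ∂ν = ENNReal.ofReal (G z) := by
    intro z
    have := hH z Set.univ MeasurableSet.univ
    simpa using this.symm
  simp_rw [h2]
  rw [← ofReal_integral_eq_lintegral_ofReal (G_integrable hG_meas hG0 hcG η)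
    (Filter.Eventually.of_forall hG0)]
  have hSG : 0 < ∫ y, G y ∂η := SG_pos hG_meas hG_pos hcG η
  rw [ENNReal.inv_mul_cancel (by simp [ENNReal.ofReal_pos.mpr hSG, (ENNReal.ofReal_pos.mpr hSG).ne']) ENNReal.ofReal_ne_top]

lemma key_identity [IsMarkovKernel M] [IsProbabilityMeasure ν]
    (hq_meas : Measurable fun p : X × X => q p.1 p.2)
    (hεm_pos : 0 < εm) (hq_lb : ∀ x y, εm ≤ q x y) (hq_ub : ∀ x y, q x y ≤ εp)
    (hG_meas : Measurable G) (hG_pos : ∀ x, 0 < G x)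
    {cG : ℝ} (hcG : ∀ x, G x ≤ cG)
    (hH : ∀ x (A : Set X), MeasurableSet A →
      ENNReal.ofReal (G x) * M x A = ∫⁻ y in A, ENNReal.ofReal (q x y) ∂ν)
    (η : Measure X) [IsProbabilityMeasure η] (u0 : X → ℝ) (x : X) :
    ∫ x', (∫ y, G y ∂η) * q x x' / (∫ y, q y x' ∂η) * u0 x' ∂(PhiM G M η)
      = Qop G M u0 x := by
  have hG0 : ∀ x, 0 ≤ G x := fun x => (hG_pos x).le
  have hSG : 0 < ∫ y, G y ∂η := SG_pos hG_meas hG_pos hcG η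
  rw [phi_withDensity hq_meas hεm_pos hq_lb hq_ub hG_meas hG0 hcG hH η,
    integral_smul_measure,
    integral_withDensity_ofReal (Sq_meas hq_meas η)
      (fun y => le_trans hεm_pos.le (Sq_lb hq_meas hεm_pos hq_lb hq_ub η y)) _]
  have htoReal : ((ENNReal.ofReal (∫ y, G y ∂η))⁻¹).toReal = (∫ y, G y ∂η)⁻¹ := by
    rw [ENNReal.toReal_inv, ENNReal.toReal_ofReal hSG.le]
  rw [htoReal, Qop_eq_nu hq_meas (fun a b => le_trans hεm_pos.le (hq_lb a b)) hG0 hH u0 x]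
  have hpt : ∀ y : X, (∫ z, q z y ∂η) * ((∫ y', G y' ∂η) * q x y / (∫ z, q z y ∂η) * u0 y)
      = (∫ y', G y' ∂η) * (q x y * u0 y) := by
    intro y
    have hBy : (∫ z, q z y ∂η) ≠ 0 :=
      (lt_of_lt_of_le hεm_pos (Sq_lb hq_meas hεm_pos hq_lb hq_ub η y)).ne'
    field_simp
  rw [integral_congr_ae (Filter.Eventually.of_forall hpt), integral_const_mul _ _,
    smul_eq_mul, ← mul_assoc, inv_mul_cancel₀ hSG.ne', one_mul]

end Aux4
section Aux5

variable {X : Type*} [MeasurableSpace X]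
variable {G : X → ℝ} {M : Kernel X X} {ν : Measure X} {q : X → X → ℝ} {εm εp : ℝ}

lemma QNgap_shift (η : ℕ → Measure X) :
    ∀ (k p : ℕ) (f : X → ℝ),
      QNgap G q (fun j => η (j + 1)) p k f = QNgap G q η (p + 1) k f := by
  intro k
  induction k with
  | zero => intro p f; rfl
  | succ k ih =>
    intro p f
    show QNop G q (fun j => η (j + 1)) p (QNgap G q (fun j => η (j + 1)) (p + 1) k f)
      = QNop G q η (p + 1) (QNgap G q η (p + 2) k f)
    rw [ih]
    rfl

lemma etaOf_zero {N n : ℕ} (traj : Fin (n + 1) → Fin N → X) :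
    etaOf N n traj 0 = emp N (traj 0) := by
  unfold etaOf
  congr 1

lemma etaOf_cons_succ {N n : ℕ} (ζ : Fin N → X) (traj : Fin (n + 1) → Fin N → X) (j : ℕ) :
    etaOf N (n + 1) (Fin.cons ζ traj) (j + 1) = etaOf N n traj j := by
  unfold etaOf
  have h : (⟨min (j + 1) (n + 1), by omega⟩ : Fin (n + 2))
      = Fin.succ ⟨min j n, by omega⟩ := by
    ext; simp [Fin.succ]
  rw [h, Fin.cons_succ]

lemma etaOf_cons_zero {N n : ℕ} (ζ : Fin N → X) (traj : Fin (n + 1) → Fin N → X) :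
    etaOf N (n + 1) (Fin.cons ζ traj) 0 = emp N ζ := by
  unfold etaOf
  have h : (⟨min 0 (n + 1), by omega⟩ : Fin (n + 2)) = 0 := by ext; simp
  rw [h, Fin.cons_zero]

lemma Enn_congr (G : X → ℝ) (M : Kernel X X) (N : ℕ) :
    ∀ (n : ℕ) (m0 : Measure (Fin N → X)) (F₁ F₂ : (Fin (n + 1) → Fin N → X) → ℝ),
      (∀ t, F₁ t = F₂ t) → Enn G M N n m0 F₁ = Enn G M N n m0 F₂ := by
  intro n
  induction n with
  | zero =>
    intro m0 F₁ F₂ h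
    simp only [Enn]
    exact integral_congr_ae (Filter.Eventually.of_forall fun ζ => h _)
  | succ n ih =>
    intro m0 F₁ F₂ h
    simp only [Enn]
    exact integral_congr_ae (Filter.Eventually.of_forall fun ζ =>
      ih _ _ _ fun t => h _)

lemma integral_eval_pi {N : ℕ} {μs : Measure X} [IsProbabilityMeasure μs] (i : Fin N)
    {u : X → ℝ} (hu : Measurable u) :
    ∫ τ, u (τ i) ∂(Measure.pi fun _ : Fin N => μs) = ∫ x, u x ∂μs := by
  have hmap : (Measure.pi fun _ : Fin N => μs).map (Function.eval i) = μs := by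
    ext A hA
    rw [Measure.map_apply (measurable_pi_apply i) hA]
    rw [Set.eval_preimage, Measure.pi_pi]
    rw [Finset.prod_eq_single i (fun j _ hj => by simp [Function.update_of_ne hj])
      (by simp)]
    simp
  conv_rhs => rw [← hmap]
  rw [integral_map (measurable_pi_apply i).aemeasurable hu.aestronglyMeasurable]

/-- The empirical-measure kernel. -/
noncomputable def empK (N : ℕ) : Kernel (Fin N → X) X where
  toFun := fun ζ => emp N ζ
  measurable' := by
    apply Measure.measurable_of_measurable_coe
    intro s hs
    simp only [emp, Measure.smul_apply, Measure.finset_sum_apply, smul_eq_mul]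
    refine Measurable.const_mul (Finset.measurable_sum _ fun i _ => ?_) _
    simp_rw [Measure.dirac_apply' _ hs]
    exact (measurable_one.indicator hs).comp (measurable_pi_apply i)

lemma empK_apply (N : ℕ) (ζ : Fin N → X) : (empK N : Kernel (Fin N → X) X) ζ = emp N ζ := rfl

lemma empK_markov {N : ℕ} (hN : 1 ≤ N) :
    IsMarkovKernel (empK (X := X) N) := ⟨fun ζ => emp_prob hN ζ⟩

end Aux5
section Aux6

variable {X : Type*} [MeasurableSpace X]
variable {G : X → ℝ} {M : Kernel X X} {ν : Measure X} {q : X → X → ℝ} {εm εp : ℝ}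

lemma weight_bound (hq_meas : Measurable fun p : X × X => q p.1 p.2)
    (hεm_pos : 0 < εm) (hq_lb : ∀ x y, εm ≤ q x y) (hq_ub : ∀ x y, q x y ≤ εp)
    (hG_meas : Measurable G) (hG_pos : ∀ x, 0 < G x)
    {cG : ℝ} (hcG : ∀ x, G x ≤ cG) (hcG0 : 0 ≤ cG) (hεp0 : 0 ≤ εp)
    (η η' : Measure X) [IsProbabilityMeasure η] (x x' : X) :
    |(∫ y, G y ∂η) * q x x' / (∫ y, q y x' ∂η)| ≤ cG * εp / εm := by
  have hG0 : ∀ x, 0 ≤ G x := fun x => (hG_pos x).le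
  have hA0 : 0 ≤ ∫ y, G y ∂η := integral_nonneg hG0
  have hAcG : ∫ y, G y ∂η ≤ cG := SG_le hG_meas hG0 hcG η
  have hB : εm ≤ ∫ y, q y x' ∂η := Sq_lb hq_meas hεm_pos hq_lb hq_ub η x'
  have hq0 : 0 ≤ q x x' := le_trans hεm_pos.le (hq_lb x x')
  rw [abs_of_nonneg (div_nonneg (mul_nonneg hA0 hq0) (le_trans hεm_pos.le hB))]
  exact div_le_div₀ (mul_nonneg hcG0 hεp0)
    (mul_le_mul hAcG (hq_ub x x') hq0 hcG0) hεm_pos hB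

lemma QNgap_meas_bdd
    (hq_meas : Measurable fun p : X × X => q p.1 p.2)
    (hεm_pos : 0 < εm) (hεle : εm ≤ εp)
    (hq_lb : ∀ x y, εm ≤ q x y) (hq_ub : ∀ x y, q x y ≤ εp)
    (hG_meas : Measurable G) (hG_pos : ∀ x, 0 < G x)
    {cG : ℝ} (hcG : ∀ x, G x ≤ cG) (hcG0 : 0 ≤ cG)
    (η : ℕ → Measure X) (hη : ∀ j, IsProbabilityMeasure (η j))
    {φ : X → ℝ} {C : ℝ} (hφ : Measurable φ) (hC : ∀ x, |φ x| ≤ C) :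
    ∀ (k p : ℕ), Measurable (QNgap G q η p k φ) ∧
      ∀ x, |QNgap G q η p k φ x| ≤ (cG * εp / εm) ^ k * C := by
  have hεp0 : 0 ≤ εp := le_trans hεm_pos.le hεle
  have hK0 : 0 ≤ cG * εp / εm := by positivity
  intro k
  induction k with
  | zero => intro p; exact ⟨hφ, fun x => by simpa [QNgap] using hC x⟩
  | succ k ih =>
    intro p
    obtain ⟨hm, hb⟩ := ih (p + 1)
    haveI := hη p
    haveI := hη (p + 1)
    constructor
    · show Measurable (QNop G q η p (QNgap G q η (p + 1) k φ))
      have hjoint : StronglyMeasurable fun r : X × X =>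
          (∫ y, G y ∂(η p)) * q r.1 r.2 / (∫ y, q y r.2 ∂(η p))
            * QNgap G q η (p + 1) k φ r.2 := by
        refine Measurable.stronglyMeasurable ?_
        exact (((measurable_const.mul hq_meas).div
          ((Sq_meas hq_meas (η p)).comp measurable_snd)).mul (hm.comp measurable_snd))
      exact hjoint.integral_prod_right'.measurable
    · intro x
      show |QNop G q η p (QNgap G q η (p + 1) k φ) x| ≤ _
      rw [QNop]
      have hbd : ∀ x' : X, ‖(∫ y, G y ∂(η p)) * q x x' / (∫ y, q y x' ∂(η p))
          * QNgap G q η (p + 1) k φ x'‖ ≤ (cG * εp / εm) * ((cG * εp / εm) ^ k * C) := by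
        intro x'
        rw [Real.norm_eq_abs, abs_mul]
        exact mul_le_mul (weight_bound hq_meas hεm_pos hq_lb hq_ub hG_meas hG_pos hcG
          hcG0 hεp0 (η p) (η (p + 1)) x x') (hb x') (abs_nonneg _) hK0
      calc |∫ x', (∫ y, G y ∂(η p)) * q x x' / (∫ y, q y x' ∂(η p))
            * QNgap G q η (p + 1) k φ x' ∂(η (p + 1))|
          ≤ (cG * εp / εm) * ((cG * εp / εm) ^ k * C) * ((η (p + 1)) Set.univ).toReal := by
            exact norm_integral_le_of_norm_le_const
              (Filter.Eventually.of_forall hbd)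
        _ = (cG * εp / εm) ^ (k + 1) * C := by simp [measure_univ]; ring

lemma Qiter_meas_bdd [IsMarkovKernel M] [IsProbabilityMeasure ν]
    (hq_meas : Measurable fun p : X × X => q p.1 p.2)
    (hεm_pos : 0 < εm) (hq_lb : ∀ x y, εm ≤ q x y)
    (hG_meas : Measurable G) (hG_pos : ∀ x, 0 < G x)
    {cG : ℝ} (hcG : ∀ x, G x ≤ cG) (hcG0 : 0 ≤ cG)
    (hH : ∀ x (A : Set X), MeasurableSet A →
      ENNReal.ofReal (G x) * M x A = ∫⁻ y in A, ENNReal.ofReal (q x y) ∂ν)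
    {φ : X → ℝ} {C : ℝ} (hφ : Measurable φ) (hC : ∀ x, |φ x| ≤ C) :
    ∀ n : ℕ, Measurable (Qiter G M n φ) ∧ ∀ x, |Qiter G M n φ x| ≤ cG ^ n * C := by
  intro n
  induction n with
  | zero => exact ⟨hφ, fun x => by simpa [Qiter] using hC x⟩
  | succ n ih =>
    obtain ⟨hm, hb⟩ := ih
    have heq : Qiter G M (n + 1) φ = fun x => ∫ y, q x y * Qiter G M n φ y ∂ν := by
      funext x
      show Qop G M (Qiter G M n φ) x = _
      exact Qop_eq_nu hq_meas (fun a b => le_trans hεm_pos.le (hq_lb a b))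
        (fun z => (hG_pos z).le) hH _ x
    constructor
    · rw [heq]
      exact ((hq_meas.mul (hm.comp measurable_snd)).stronglyMeasurable.integral_prod_right').measurable
    · intro x
      show |Qop G M (Qiter G M n φ) x| ≤ _
      rw [Qop, abs_mul]
      calc |G x| * |∫ y, Qiter G M n φ y ∂(M x)|
          ≤ cG * (cG ^ n * C * ((M x) Set.univ).toReal) := by
            refine mul_le_mul ?_ ?_ (abs_nonneg _) hcG0
            · rw [abs_of_nonneg (hG_pos x).le]; exact hcG x
            · rw [← Real.norm_eq_abs]
              exact norm_integral_le_of_norm_le_const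
                (Filter.Eventually.of_forall fun y => by simpa using hb y)
        _ = cG ^ (n + 1) * C := by simp [measure_univ]; ring_nf

end Aux6
lemma main_induction {X : Type*} [MeasurableSpace X]
    (G : X → ℝ) (M : Kernel X X) [IsMarkovKernel M]
    (ν : Measure X) [IsProbabilityMeasure ν]
    (q : X → X → ℝ) (εm εp : ℝ)
    (hq_meas : Measurable fun p : X × X => q p.1 p.2)
    (hεm_pos : 0 < εm) (hεle : εm ≤ εp)
    (hq_lb : ∀ x y, εm ≤ q x y) (hq_ub : ∀ x y, q x y ≤ εp)
    (hG_meas : Measurable G) (hG_pos : ∀ x, 0 < G x)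
    {cG : ℝ} (hcG : ∀ x, G x ≤ cG) (hcG0 : 0 ≤ cG)
    (hH : ∀ x (A : Set X), MeasurableSet A →
      ENNReal.ofReal (G x) * M x A = ∫⁻ y in A, ENNReal.ofReal (q x y) ∂ν)
    (N : ℕ) (hN : 1 ≤ N)
    (φ : X → ℝ) (hφ_meas : Measurable φ) {Cφ : ℝ} (hφC : ∀ x, |φ x| ≤ Cφ) :
    ∀ (n : ℕ) (m0 : Measure (Fin N → X)), IsProbabilityMeasure m0 →
      ∀ (ρ : Kernel (Fin N → X) X), IsMarkovKernel ρ →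
      ∀ (g : (Fin N → X) → X → ℝ), Measurable (Function.uncurry g) →
      ∀ (Cg : ℝ), (∀ ζ x, |g ζ x| ≤ Cg) →
      Enn G M N n m0
        (fun traj => ∫ x, g (traj 0) x * QNgap G q (etaOf N n traj) 0 n φ x ∂(ρ (traj 0)))
        = ∫ ζ, ∫ x, g ζ x * Qiter G M n φ x ∂(ρ ζ) ∂m0 := by
  intro n
  induction n with
  | zero =>
    intro m0 hm0 ρ hρ g hg Cg hCg
    rfl
  | succ n ih =>
    intro m0 hm0 ρ hρ g hg Cg hCg
    have hG0 : ∀ x, 0 ≤ G x := fun x => (hG_pos x).le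
    have hεp0 : 0 ≤ εp := hεm_pos.le.trans hεle
    have hK0 : 0 ≤ cG * εp / εm := by positivity
    simp only [Enn]
    refine integral_congr_ae (Filter.Eventually.of_forall fun ζ => ?_)
    have hXne : Nonempty X := ⟨ζ ⟨0, hN⟩⟩
    have hCg0 : 0 ≤ Cg := (abs_nonneg _).trans (hCg ζ (ζ ⟨0, hN⟩))
    have hCφ0 : 0 ≤ Cφ := (abs_nonneg _).trans (hφC (ζ ⟨0, hN⟩))
    haveI hempP : IsProbabilityMeasure (emp N ζ) := emp_prob hN ζ
    haveI hphiP : IsProbabilityMeasure (PhiM G M (emp N ζ)) :=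
      phi_prob hq_meas hεm_pos hq_lb hq_ub hG_meas hG_pos hcG hH (emp N ζ)
    have hgζ : Measurable (g ζ) := hg.comp measurable_prodMk_left
    have hB_meas : Measurable fun x' => ∫ y, q y x' ∂(emp N ζ) := Sq_meas hq_meas _
    -- the weight function
    set w : X → ℝ := fun x' => ∫ x,
      g ζ x * ((∫ y, G y ∂(emp N ζ)) * q x x' / (∫ y, q y x' ∂(emp N ζ))) ∂(ρ ζ) with hwdef
    have hw_meas : Measurable w := by
      have hj : StronglyMeasurable fun r : X × X =>
          g ζ r.1 * ((∫ y, G y ∂(emp N ζ)) * q r.1 r.2 / (∫ y, q y r.2 ∂(emp N ζ))) :=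
        ((hgζ.comp measurable_fst).mul ((measurable_const.mul hq_meas).div
          (hB_meas.comp measurable_snd))).stronglyMeasurable
      exact hj.integral_prod_left'.measurable
    have hw_bdd : ∀ x', |w x'| ≤ Cg * (cG * εp / εm) := by
      intro x'
      rw [← Real.norm_eq_abs]
      calc ‖w x'‖ ≤ Cg * (cG * εp / εm) * ((ρ ζ) Set.univ).toReal := by
            refine norm_integral_le_of_norm_le_const
              (Filter.Eventually.of_forall fun x => ?_)
            rw [Real.norm_eq_abs, abs_mul]
            exact mul_le_mul (hCg ζ x)
              (weight_bound hq_meas hεm_pos hq_lb hq_ub hG_meas hG_pos hcG hcG0 hεp0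
                (emp N ζ) (emp N ζ) x x') (abs_nonneg _) hCg0
        _ = Cg * (cG * εp / εm) := by simp [measure_univ]
    -- Qiter facts
    obtain ⟨hQm, hQb⟩ := Qiter_meas_bdd hq_meas hεm_pos hq_lb hG_meas hG_pos hcG hcG0 hH
      hφ_meas hφC n
    -- Step A : rewrite the integrand after peeling off the first time step
    have stepA : ∀ traj' : Fin (n + 1) → Fin N → X,
        (∫ x, g ζ x * QNgap G q (etaOf N (n + 1) (Fin.cons ζ traj')) 0 (n + 1) φ x ∂(ρ ζ))
          = ∫ x', w x' * QNgap G q (etaOf N n traj') 0 n φ x' ∂((empK N) (traj' 0)) := by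
      intro traj'
      obtain ⟨hψm, hψb⟩ := QNgap_meas_bdd hq_meas hεm_pos hεle hq_lb hq_ub hG_meas hG_pos
        hcG hcG0 (etaOf N n traj') (fun j => emp_prob hN (traj' ⟨min j n, by omega⟩)) hφ_meas hφC n 0
      have hgapeq : QNgap G q (etaOf N (n + 1) (Fin.cons ζ traj')) 0 (n + 1) φ
          = QNop G q (etaOf N (n + 1) (Fin.cons ζ traj')) 0
              (QNgap G q (etaOf N n traj') 0 n φ) := by
        show QNop G q (etaOf N (n + 1) (Fin.cons ζ traj')) 0
            (QNgap G q (etaOf N (n + 1) (Fin.cons ζ traj')) (0 + 1) n φ) = _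
        rw [← QNgap_shift (G := G) (q := q) (etaOf N (n + 1) (Fin.cons ζ traj')) n 0 φ,
          show (fun j => etaOf N (n + 1) (Fin.cons ζ traj') (j + 1)) = etaOf N n traj'
            from funext fun j => etaOf_cons_succ ζ traj' j]
      have hη0 : etaOf N (n + 1) (Fin.cons ζ traj') 0 = emp N ζ := etaOf_cons_zero ζ traj'
      have hη1 : etaOf N (n + 1) (Fin.cons ζ traj') (0 + 1) = emp N (traj' 0) := by
        rw [etaOf_cons_succ, etaOf_zero]
      rw [hgapeq]
      simp only [QNop, hη0, hη1]
      rw [empK_apply, integral_emp _ (f := fun x' => w x' * QNgap G q (etaOf N n traj') 0 n φ x') (hw_meas.mul hψm)]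
      have hpt : ∀ x : X, g ζ x * (∫ x', (∫ y, G y ∂(emp N ζ)) * q x x'
              / (∫ y, q y x' ∂(emp N ζ)) * QNgap G q (etaOf N n traj') 0 n φ x'
              ∂(emp N (traj' 0)))
          = ∑ i : Fin N, (N : ℝ)⁻¹ *
              ((g ζ x * ((∫ y, G y ∂(emp N ζ)) * q x (traj' 0 i)
                / (∫ y, q y (traj' 0 i) ∂(emp N ζ))))
               * QNgap G q (etaOf N n traj') 0 n φ (traj' 0 i)) := by
        intro x
        rw [integral_emp _ (f := fun x' => (∫ y, G y ∂(emp N ζ)) * q x x' / (∫ y, q y x' ∂(emp N ζ)) * QNgap G q (etaOf N n traj') 0 n φ x') (((measurable_const.mul (q_meas_left hq_meas x)).div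
          hB_meas).mul hψm), ← mul_assoc, Finset.mul_sum]
        refine Finset.sum_congr rfl fun i _ => by ring
      rw [integral_congr_ae (Filter.Eventually.of_forall hpt)]
      have hint : ∀ i : Fin N, Integrable (fun x => (N : ℝ)⁻¹ *
          ((g ζ x * ((∫ y, G y ∂(emp N ζ)) * q x (traj' 0 i)
            / (∫ y, q y (traj' 0 i) ∂(emp N ζ))))
           * QNgap G q (etaOf N n traj') 0 n φ (traj' 0 i))) (ρ ζ) := by
        intro i
        refine integrable_of_bdd ?_
          (C := |(N : ℝ)⁻¹| * ((Cg * (cG * εp / εm)) * ((cG * εp / εm) ^ n * Cφ)))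
          ?_
        · exact (((hgζ.mul ((measurable_const.mul (q_meas_right hq_meas _)).div_const _)).mul_const
            _).const_mul _)
        · intro x
          rw [abs_mul, abs_mul]
          refine mul_le_mul le_rfl ?_ (mul_nonneg (abs_nonneg _) (abs_nonneg _))
            (abs_nonneg _)
          refine mul_le_mul ?_ (hψb _) (abs_nonneg _) (by positivity)
          rw [abs_mul]
          exact mul_le_mul (hCg ζ x)
            (weight_bound hq_meas hεm_pos hq_lb hq_ub hG_meas hG_pos hcG hcG0 hεp0
              (emp N ζ) (emp N ζ) x _) (abs_nonneg _) hCg0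
      rw [integral_finset_sum _ fun i _ => hint i, Finset.mul_sum]
      refine Finset.sum_congr rfl fun i _ => ?_
      rw [integral_const_mul _ _, integral_mul_const]
    -- apply Step A and the induction hypothesis
    have h1 := Enn_congr G M N n (Measure.pi fun _ : Fin N => PhiM G M (emp N ζ))
      (fun traj => ∫ x, g ((Fin.cons ζ traj : Fin (n + 2) → Fin N → X) 0) x
          * QNgap G q (etaOf N (n + 1) (Fin.cons ζ traj)) 0 (n + 1) φ x
          ∂(ρ ((Fin.cons ζ traj : Fin (n + 2) → Fin N → X) 0)))
      (fun traj' => ∫ x', w x' * QNgap G q (etaOf N n traj') 0 n φ x'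
          ∂((empK N) (traj' 0)))
      (fun traj' => by simpa using stepA traj')
    have h2 := ih (Measure.pi fun _ : Fin N => PhiM G M (emp N ζ)) inferInstance
      (empK N) (empK_markov hN) (fun _ x' => w x') (hw_meas.comp measurable_snd)
      (Cg * (cG * εp / εm)) (fun _ x' => hw_bdd x')
    refine h1.trans (h2.trans ?_)
    -- Step C : integrate out the last empirical measure
    have hu_meas : Measurable fun x' => w x' * Qiter G M n φ x' := hw_meas.mul hQm
    have hu_bdd : ∀ x', |w x' * Qiter G M n φ x'|
        ≤ Cg * (cG * εp / εm) * (cG ^ n * Cφ) := fun x' => by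
      rw [abs_mul]
      exact mul_le_mul (hw_bdd x') (hQb x') (abs_nonneg _) (by positivity)
    have stepC : ∫ τ, ∫ x', w x' * Qiter G M n φ x' ∂((empK N) τ)
          ∂(Measure.pi fun _ : Fin N => PhiM G M (emp N ζ))
        = ∫ x', w x' * Qiter G M n φ x' ∂(PhiM G M (emp N ζ)) := by
      have hC1 : ∀ τ : Fin N → X, ∫ x', w x' * Qiter G M n φ x' ∂((empK N) τ)
          = (N : ℝ)⁻¹ * ∑ i, (w (τ i) * Qiter G M n φ (τ i)) := fun τ => by
        rw [empK_apply, integral_emp _ hu_meas]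
      rw [integral_congr_ae (Filter.Eventually.of_forall hC1), integral_const_mul _ _,
        integral_finset_sum (f := fun (i : Fin N) (τ : Fin N → X) =>
            w (τ i) * Qiter G M n φ (τ i)) Finset.univ
          (fun i _ => integrable_of_bdd
            (hu_meas.comp (measurable_pi_apply i)) (fun τ => hu_bdd (τ i)))]
      have heval : ∀ i : Fin N, ∫ τ, (w (τ i) * Qiter G M n φ (τ i))
            ∂(Measure.pi fun _ : Fin N => PhiM G M (emp N ζ))
          = ∫ x', w x' * Qiter G M n φ x' ∂(PhiM G M (emp N ζ)) :=
        fun i => integral_eval_pi i hu_meas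
      rw [Finset.sum_congr rfl (fun i _ => heval i), Finset.sum_const, Finset.card_univ,
        Fintype.card_fin, nsmul_eq_mul, ← mul_assoc,
        inv_mul_cancel₀ (by exact_mod_cast (by omega : N ≠ 0)), one_mul]
    refine stepC.trans ?_
    -- Step D : the key identity
    have hpt1 : ∀ x' : X, w x' * Qiter G M n φ x'
        = ∫ x, (g ζ x * ((∫ y, G y ∂(emp N ζ)) * q x x' / (∫ y, q y x' ∂(emp N ζ))))
            * Qiter G M n φ x' ∂(ρ ζ) := fun x' => (integral_mul_const _ _).symm
    rw [integral_congr_ae (Filter.Eventually.of_forall hpt1)]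
    have hintprod : Integrable (Function.uncurry fun x' x =>
        (g ζ x * ((∫ y, G y ∂(emp N ζ)) * q x x' / (∫ y, q y x' ∂(emp N ζ))))
          * Qiter G M n φ x') ((PhiM G M (emp N ζ)).prod (ρ ζ)) := by
      refine integrable_of_bdd ?_
        (C := Cg * (cG * εp / εm) * (cG ^ n * Cφ)) ?_
      · exact (((hgζ.comp measurable_snd).mul ((measurable_const.mul
          (hq_meas.comp measurable_swap)).div (hB_meas.comp measurable_fst))).mul
          (hQm.comp measurable_fst))
      · rintro ⟨x', x⟩
        show |(g ζ x * ((∫ y, G y ∂(emp N ζ)) * q x x' / (∫ y, q y x' ∂(emp N ζ))))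
          * Qiter G M n φ x'| ≤ _
        rw [abs_mul]
        refine mul_le_mul ?_ (hQb x') (abs_nonneg _) (by positivity)
        rw [abs_mul]
        exact mul_le_mul (hCg ζ x)
          (weight_bound hq_meas hεm_pos hq_lb hq_ub hG_meas hG_pos hcG hcG0 hεp0
            (emp N ζ) (emp N ζ) x x') (abs_nonneg _) hCg0
    rw [integral_integral_swap hintprod]
    have hpt2 : ∀ x : X, ∫ x', (g ζ x * ((∫ y, G y ∂(emp N ζ)) * q x x'
          / (∫ y, q y x' ∂(emp N ζ)))) * Qiter G M n φ x' ∂(PhiM G M (emp N ζ))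
        = g ζ x * Qiter G M (n + 1) φ x := by
      intro x
      have hr : ∀ x' : X, (g ζ x * ((∫ y, G y ∂(emp N ζ)) * q x x'
            / (∫ y, q y x' ∂(emp N ζ)))) * Qiter G M n φ x'
          = g ζ x * ((∫ y, G y ∂(emp N ζ)) * q x x' / (∫ y, q y x' ∂(emp N ζ))
            * Qiter G M n φ x') := fun x' => by ring
      rw [integral_congr_ae (Filter.Eventually.of_forall hr), integral_const_mul _ _,
        key_identity hq_meas hεm_pos hq_lb hq_ub hG_meas hG_pos hcG hH (emp N ζ)
          (Qiter G M n φ) x]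
      rfl
    rw [integral_congr_ae (Filter.Eventually.of_forall hpt2)]

theorem stmt17 {X : Type*} [MeasurableSpace X]
    (G : X → ℝ) (M : Kernel X X) [IsMarkovKernel M]
    (ν : Measure X) [IsProbabilityMeasure ν]
    (q : X → X → ℝ) (εm εp : ℝ)
    (hq_meas : Measurable fun p : X × X => q p.1 p.2)
    (hεm_pos : 0 < εm) (hεle : εm ≤ εp)
    (hq_lb : ∀ x y, εm ≤ q x y) (hq_ub : ∀ x y, q x y ≤ εp)
    (hG_meas : Measurable G) (hG_pos : ∀ x, 0 < G x) (hG_bdd : ∃ c, ∀ x, G x ≤ c)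
    (hH : ∀ x (A : Set X), MeasurableSet A →
      ENNReal.ofReal (G x) * M x A = ∫⁻ y in A, ENNReal.ofReal (q x y) ∂ν)
    (μ μ' : Measure X) [IsProbabilityMeasure μ] [IsProbabilityMeasure μ']
    (N : ℕ) (hN : 1 ≤ N) (n : ℕ)
    (κ : Kernel (Fin N → X) X) [IsMarkovKernel κ]
    (hκ : ∀ A : Set X, MeasurableSet A →
      ∫⁻ ζ, κ ζ A ∂(Measure.pi fun _ : Fin N => μ) = μ' A)
    (φ : X → ℝ) (hφ_meas : Measurable φ) (hφ_bdd : ∃ c, ∀ x, |φ x| ≤ c) :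
    Enn G M N n (Measure.pi fun _ : Fin N => μ)
        (fun traj => ∫ x, QNgap G q (etaOf N n traj) 0 n φ x ∂(κ (traj 0)))
      = ∫ x, Qiter G M n φ x ∂μ' ∧
    Enn G M N n (Measure.pi fun _ : Fin N => μ)
        (fun traj => ∫ x, QNgap G q (etaOf N n traj) 0 n φ x ∂μ')
      = ∫ x, Qiter G M n φ x ∂μ' := by
  obtain ⟨cG, hcG⟩ := hG_bdd
  obtain ⟨Cφ, hφC⟩ := hφ_bdd
  have hXne : Nonempty X := by
    by_contra hX
    rw [not_nonempty_iff] at hX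
    have h1 : (ν : Measure X) Set.univ = 1 := measure_univ
    rw [Set.univ_eq_empty_iff.mpr hX, measure_empty] at h1
    exact zero_ne_one h1
  have hcG0 : 0 ≤ cG :=
    le_of_lt (lt_of_lt_of_le (hG_pos Classical.ofNonempty) (hcG _))
  have hmain := main_induction G M ν q εm εp hq_meas hεm_pos hεle hq_lb hq_ub
    hG_meas hG_pos hcG hcG0 hH N hN φ hφ_meas hφC n
  obtain ⟨hQm, hQb⟩ := Qiter_meas_bdd hq_meas hεm_pos hq_lb hG_meas hG_pos hcG hcG0 hH
    hφ_meas hφC n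
  constructor
  · have h1 := hmain (Measure.pi fun _ : Fin N => μ) inferInstance κ inferInstance
      (fun _ _ => (1 : ℝ)) measurable_const 1 (by simp)
    simp only [one_mul] at h1
    refine h1.trans ?_
    have hsnd : ((Measure.pi fun _ : Fin N => μ) ⊗ₘ κ).snd = μ' := by
      ext A hA
      rw [Measure.snd_apply hA, Measure.compProd_apply (measurable_snd hA)]
      exact hκ A hA
    haveI : IsProbabilityMeasure ((Measure.pi fun _ : Fin N => μ) ⊗ₘ κ) := by
      constructor
      rw [Measure.compProd_apply_univ]
      exact measure_univ
    have hint : Integrable (fun p : (Fin N → X) × X => Qiter G M n φ p.2)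
        ((Measure.pi fun _ : Fin N => μ) ⊗ₘ κ) :=
      integrable_of_bdd (hQm.comp measurable_snd) (fun p => hQb p.2)
    calc ∫ ζ, ∫ x, Qiter G M n φ x ∂(κ ζ) ∂(Measure.pi fun _ : Fin N => μ)
        = ∫ p : (Fin N → X) × X, Qiter G M n φ p.2
            ∂((Measure.pi fun _ : Fin N => μ) ⊗ₘ κ) :=
          (Measure.integral_compProd hint).symm
      _ = ∫ x, Qiter G M n φ x ∂μ' := by
          rw [← hsnd, Measure.snd,
            integral_map measurable_snd.aemeasurable hQm.aestronglyMeasurable]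
  · have h2 := hmain (Measure.pi fun _ : Fin N => μ) inferInstance
      (Kernel.const _ μ') inferInstance (fun _ _ => (1 : ℝ)) measurable_const 1 (by simp)
    simp only [one_mul, Kernel.const_apply] at h2
    refine h2.trans ?_
    rw [integral_const]
    simp [measure_univ]
end

section
/- Under assumption (H) with G := exp(−U), and given a principal eigen-triple (λ⋆, η⋆, h⋆) with twisted kernel P⋆, the Bellman average-cost optimality equation is solved by V⋆ := −log h⋆ and ς⋆ := −log λ⋆: for every x ∈ X, V⋆(x) + ς⋆ = inf_{h∈H} [ U(x) + KL(M̌_h‖M)(x) + M̌_h(V⋆)(x) ]; moreover the infimum is attained at h = h⋆, and M̌_{h⋆}(x,dy) = P⋆(x,dy) for every x. -/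
open MeasureTheory ProbabilityTheory Filter
open scoped ENNReal

/-- `M(h)(x) = ∫ h(y) M(x,dy)`. -/
noncomputable def Mint {X : Type*} [MeasurableSpace X] (M : Kernel X X)
    (h : X → ℝ) (x : X) : ℝ :=
  ∫ y, h y ∂(M x)

/-- The twisted kernel `M̌_h(x,dy) := M(x,dy) h(y) / M(h)(x)` acting on a function `V`. -/
noncomputable def Mcheck {X : Type*} [MeasurableSpace X] (M : Kernel X X)
    (h : X → ℝ) (V : X → ℝ) (x : X) : ℝ :=
  ∫ y, h y / Mint M h x * V y ∂(M x)

/-- The Kullback–Leibler divergence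
`KL(M̌_h‖M)(x) = ∫ M̌_h(x,dy) log (dM̌_h(x,·)/dM(x,·))(y)`,
using `dM̌_h(x,·)/dM(x,·) = h/M(h)(x)`. -/
noncomputable def KLdiv {X : Type*} [MeasurableSpace X] (M : Kernel X X)
    (h : X → ℝ) (x : X) : ℝ :=
  ∫ y, h y / Mint M h x * Real.log (h y / Mint M h x) ∂(M x)

/-- The class `H` of bounded measurable functions `h : X → (0,∞)` with
`sup_{x,y} h(x)/h(y) < ∞`, i.e. bounded above and bounded below away from `0`. -/
def memH {X : Type*} [MeasurableSpace X] (h : X → ℝ) : Prop :=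
  Measurable h ∧ (∃ a : ℝ, 0 < a ∧ ∀ x, a ≤ h x) ∧ (∃ b : ℝ, ∀ x, h x ≤ b)

section Aux


variable {X : Type*} [MeasurableSpace X]

private lemma integrable_bdd (μ : Measure X) [IsFiniteMeasure μ] {f : X → ℝ}
    (hf : Measurable f) {C : ℝ} (hb : ∀ x, |f x| ≤ C) : Integrable f μ :=
  (integrable_const C).mono' hf.aestronglyMeasurable (ae_of_all _ fun y => by simpa using hb y)

private lemma log_abs_bound {a b t : ℝ} (ha : 0 < a) (h1 : a ≤ t) (h2 : t ≤ b) :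
    |Real.log t| ≤ |Real.log a| + |Real.log b| := by
  have ht : 0 < t := lt_of_lt_of_le ha h1
  have h3 : Real.log a ≤ Real.log t := Real.log_le_log ha h1
  have h4 : Real.log t ≤ Real.log b := Real.log_le_log ht h2
  rw [abs_le]
  constructor
  · have := neg_abs_le (Real.log a); have := abs_nonneg (Real.log b); linarith
  · have := le_abs_self (Real.log b); have := abs_nonneg (Real.log a); linarith

private lemma abs_bdd {a b : ℝ} {t : ℝ} (h1 : a ≤ t) (h2 : t ≤ b) : |t| ≤ |a| + |b| := by
  rw [abs_le]
  constructor
  · have := neg_abs_le a; have := abs_nonneg b; linarith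
  · have := le_abs_self b; have := abs_nonneg a; linarith

private lemma Mint_mem (M : Kernel X X) [IsMarkovKernel M] {h : X → ℝ} (hm : Measurable h)
    {a b : ℝ} (hla : ∀ y, a ≤ h y) (hub : ∀ y, h y ≤ b) (x : X) :
    a ≤ Mint M h x ∧ Mint M h x ≤ b := by
  have hint : Integrable h (M x) :=
    integrable_bdd _ hm (C := |a| + |b|) fun y => abs_bdd (hla y) (hub y)
  constructor
  · have h1 : ∫ (_ : X), a ∂(M x) ≤ ∫ y, h y ∂(M x) :=
      integral_mono (integrable_const a) hint hla
    simpa [Mint] using h1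
  · have h1 : ∫ y, h y ∂(M x) ≤ ∫ (_ : X), b ∂(M x) :=
      integral_mono hint (integrable_const b) hub
    simpa [Mint] using h1

private lemma combine (M : Kernel X X) [IsMarkovKernel M] {h V : X → ℝ}
    (hm : Measurable h) {a b : ℝ} (ha : 0 < a) (hla : ∀ y, a ≤ h y) (hub : ∀ y, h y ≤ b)
    (hV : Measurable V) {CV : ℝ} (hVb : ∀ y, |V y| ≤ CV) (x : X) :
    KLdiv M h x + Mcheck M h V x
      = ∫ y, h y / Mint M h x * (Real.log (h y) - Real.log (Mint M h x) + V y) ∂(M x) := by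
  obtain ⟨hc1, hc2⟩ := Mint_mem M hm hla hub x
  simp only [KLdiv, Mcheck]
  set c := Mint M h x with hc
  have hcpos : 0 < c := lt_of_lt_of_le ha hc1
  have hbpos : 0 < b := lt_of_lt_of_le ha (le_trans (hla x) (hub x))
  have hba : (0:ℝ) ≤ b / a := by positivity
  have key : ∀ y, |h y / c| ≤ b / a := fun y => by
    rw [abs_of_nonneg (div_nonneg (le_trans ha.le (hla y)) hcpos.le)]
    exact div_le_div₀ (le_of_lt hbpos) (hub y) ha hc1
  have hint1 : Integrable (fun y => h y / c * Real.log (h y / c)) (M x) := by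
    refine integrable_bdd _ ((hm.div_const c).mul (hm.div_const c).log)
      (C := b / a * (|Real.log (a / c)| + |Real.log (b / c)|)) fun y => by
      rw [abs_mul]
      refine mul_le_mul (key y) ?_ (abs_nonneg _) hba
      exact log_abs_bound (div_pos ha hcpos) ((div_le_div_iff_of_pos_right hcpos).2 (hla y))
        ((div_le_div_iff_of_pos_right hcpos).2 (hub y))
  have hint2 : Integrable (fun y => h y / c * V y) (M x) := by
    refine integrable_bdd _ ((hm.div_const c).mul hV) (C := b / a * CV) fun y => by
      rw [abs_mul]
      exact mul_le_mul (key y) (hVb y) (abs_nonneg _) hba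
  rw [← integral_add hint1 hint2]
  refine integral_congr_ae (ae_of_all _ fun y => ?_)
  have hhy : (0:ℝ) < h y := lt_of_lt_of_le ha (hla y)
  dsimp only
  rw [Real.log_div hhy.ne' hcpos.ne']
  ring

private lemma gibbs (M : Kernel X X) [IsMarkovKernel M] {h g : X → ℝ}
    (hm : Measurable h) {a b : ℝ} (ha : 0 < a) (hla : ∀ y, a ≤ h y) (hub : ∀ y, h y ≤ b)
    (hgm : Measurable g) {a' b' : ℝ} (ha' : 0 < a') (hla' : ∀ y, a' ≤ g y)
    (hub' : ∀ y, g y ≤ b') (x : X) :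
    -Real.log (Mint M g x)
      ≤ ∫ y, h y / Mint M h x * (Real.log (h y) - Real.log (Mint M h x) - Real.log (g y))
          ∂(M x) := by
  obtain ⟨hc1, hc2⟩ := Mint_mem M hm hla hub x
  obtain ⟨hd1, hd2⟩ := Mint_mem M hgm hla' hub' x
  set c := Mint M h x with hc
  set d := Mint M g x with hd
  have hcpos : 0 < c := lt_of_lt_of_le ha hc1
  have hdpos : 0 < d := lt_of_lt_of_le ha' hd1
  have hbpos : 0 < b := lt_of_lt_of_le ha (le_trans (hla x) (hub x))
  have hb'pos : 0 < b' := lt_of_lt_of_le ha' (le_trans (hla' x) (hub' x))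
  have hba : (0:ℝ) ≤ b / a := by positivity
  have key : ∀ y, |h y / c| ≤ b / a := fun y => by
    rw [abs_of_nonneg (div_nonneg (le_trans ha.le (hla y)) hcpos.le)]
    exact div_le_div₀ (le_of_lt hbpos) (hub y) ha hc1
  have hhint : Integrable h (M x) :=
    integrable_bdd _ hm (fun y => abs_bdd (hla y) (hub y))
  have hgint : Integrable g (M x) :=
    integrable_bdd _ hgm (fun y => abs_bdd (hla' y) (hub' y))
  have hintc : ∫ y, h y ∂(M x) = c := by rw [hc]; rfl
  have hintd : ∫ y, g y ∂(M x) = d := by rw [hd]; rfl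
  have hψmeas : Measurable fun y => h y / c * (Real.log (h y) - Real.log c - Real.log (g y)) :=
    (hm.div_const c).mul ((hm.log.sub measurable_const).sub hgm.log)
  have hψint : Integrable
      (fun y => h y / c * (Real.log (h y) - Real.log c - Real.log (g y))) (M x) := by
    refine integrable_bdd _ hψmeas
      (C := b / a * ((|Real.log a| + |Real.log b|) + (|Real.log a| + |Real.log b|)
        + (|Real.log a'| + |Real.log b'|))) fun y => by
      rw [abs_mul]
      refine mul_le_mul (key y) ?_ (abs_nonneg _) hba
      have b1 := abs_le.1 (log_abs_bound ha (hla y) (hub y))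
      have b2 := abs_le.1 (log_abs_bound ha hc1 hc2)
      have b3 := abs_le.1 (log_abs_bound ha' (hla' y) (hub' y))
      rw [abs_le]
      exact ⟨by linarith [b1.1, b2.2, b3.2], by linarith [b1.2, b2.1, b3.1]⟩
  have hg1int : Integrable
      (fun y => -(h y / c * (Real.log (h y) - Real.log c - Real.log (g y)))
        + -Real.log d / c * h y) (M x) :=
    hψint.neg.add (hhint.const_mul _)
  have hg2int : Integrable (fun y => g y / d - h y / c) (M x) :=
    (hgint.div_const d).sub (hhint.div_const c)
  have pointwise : ∀ y,
      -(h y / c * (Real.log (h y) - Real.log c - Real.log (g y))) + -Real.log d / c * h y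
        ≤ g y / d - h y / c := by
    intro y
    have hhy : (0:ℝ) < h y := lt_of_lt_of_le ha (hla y)
    have hgy : (0:ℝ) < g y := lt_of_lt_of_le ha' (hla' y)
    have ht : (0:ℝ) < g y * c / (h y * d) := by positivity
    have hlog := Real.log_le_sub_one_of_pos ht
    rw [Real.log_div (by positivity) (by positivity),
      Real.log_mul hgy.ne' hcpos.ne', Real.log_mul hhy.ne' hdpos.ne'] at hlog
    have hmul := mul_le_mul_of_nonneg_left hlog (le_of_lt (div_pos hhy hcpos))
    have hrhs : h y / c * (g y * c / (h y * d) - 1) = g y / d - h y / c := by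
      field_simp
    rw [hrhs] at hmul
    have hlhs : -(h y / c * (Real.log (h y) - Real.log c - Real.log (g y)))
        + -Real.log d / c * h y
        = h y / c * (Real.log (g y) + Real.log c - (Real.log (h y) + Real.log d)) := by
      ring
    rw [hlhs]
    exact hmul
  have hψnegint : Integrable
      (fun y => -(h y / c * (Real.log (h y) - Real.log c - Real.log (g y)))) (M x) := hψint.neg
  have hmono := integral_mono hg1int hg2int pointwise
  rw [integral_add hψnegint (hhint.const_mul _), integral_neg, integral_const_mul,
    integral_sub (hgint.div_const d) (hhint.div_const c), integral_div, integral_div,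
    hintc, hintd] at hmono
  have harith : -Real.log d / c * c = -Real.log d := by field_simp
  rw [harith] at hmono
  have : d / d - c / c = 0 := by field_simp; norm_num
  rw [this] at hmono
  linarith

end Aux

theorem stmt19 {X : Type*} [MeasurableSpace X]
    (U : X → ℝ) (hU_meas : Measurable U) (hU_bdd : ∃ c, ∀ x, |U x| ≤ c)
    (M : Kernel X X) [IsMarkovKernel M]
    (ν : Measure X) [IsProbabilityMeasure ν]
    (q : X → X → ℝ) (εm εp : ℝ)
    (hq_meas : Measurable fun p : X × X => q p.1 p.2)
    (hεm_pos : 0 < εm) (hεle : εm ≤ εp)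
    (hq_lb : ∀ x y, εm ≤ q x y) (hq_ub : ∀ x y, q x y ≤ εp)
    (hH : ∀ x (A : Set X), MeasurableSet A →
      ENNReal.ofReal (Real.exp (-U x)) * M x A = ∫⁻ y in A, ENNReal.ofReal (q x y) ∂ν)
    -- a principal eigen-triple (λ⋆, η⋆, h⋆) for Q = exp(−U)·M, with twisted kernel P⋆
    (lam : ℝ) (hlam_pos : 0 < lam)
    (ηs : Measure X) [IsProbabilityMeasure ηs]
    (hs : X → ℝ) (hhs_meas : Measurable hs)
    (hhs_lb : ∀ x, εm / εp ≤ hs x) (hhs_ub : ∀ x, hs x ≤ εp / εm)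
    (h_meas_eq : ∀ A : Set X, MeasurableSet A →
      ∫⁻ x, ENNReal.ofReal (Real.exp (-U x)) * M x A ∂ηs = ENNReal.ofReal lam * ηs A)
    (h_fun_eq : ∀ x, Qop (fun x => Real.exp (-U x)) M hs x = lam * hs x)
    (h_norm : ∫ x, hs x ∂ηs = 1) :
    -- V⋆ := −log h⋆ and ς⋆ := −log λ⋆ solve the Bellman average-cost optimality equation
    (∀ x : X, -Real.log (hs x) + -Real.log lam
      = ⨅ h : {h : X → ℝ // memH h},
          (U x + KLdiv M h.1 x + Mcheck M h.1 (fun y => -Real.log (hs y)) x)) ∧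
    -- the infimum is attained at h = h⋆
    memH hs ∧
    (∀ x : X, U x + KLdiv M hs x + Mcheck M hs (fun y => -Real.log (hs y)) x
      = -Real.log (hs x) + -Real.log lam) ∧
    -- M̌_{h⋆} = P⋆
    (∀ x : X, ∀ A : Set X, MeasurableSet A →
      Mcheck M hs (A.indicator fun _ => (1 : ℝ)) x
        = Qop (fun x => Real.exp (-U x)) M
            (fun y => hs y * A.indicator (fun _ => (1 : ℝ)) y) x / (lam * hs x)) := by
  set V : X → ℝ := fun y => -Real.log (hs y) with hV
  have hae : 0 < εm / εp := div_pos hεm_pos (lt_of_lt_of_le hεm_pos hεle)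
  have hmemhs : memH hs := ⟨hhs_meas, ⟨εm / εp, hae, hhs_lb⟩, ⟨εp / εm, hhs_ub⟩⟩
  have hVmeas : Measurable V := hhs_meas.log.neg
  have hVb : ∀ y, |V y| ≤ |Real.log (εm / εp)| + |Real.log (εp / εm)| := fun y => by
    rw [hV]
    dsimp only
    rw [abs_neg]
    exact log_abs_bound hae (hhs_lb y) (hhs_ub y)
  have hd := fun x => Mint_mem M hhs_meas hhs_lb hhs_ub x
  have hdpos : ∀ x, 0 < Mint M hs x := fun x => lt_of_lt_of_le hae (hd x).1
  have hspos : ∀ x, 0 < hs x := fun x => lt_of_lt_of_le hae (hhs_lb x)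
  have heig : ∀ x, Real.exp (-U x) * Mint M hs x = lam * hs x := fun x => by
    simpa [Qop, Mint] using h_fun_eq x
  have hlogeig : ∀ x, U x - Real.log (Mint M hs x) = -Real.log (hs x) + -Real.log lam := by
    intro x
    have h1 := congrArg Real.log (heig x)
    rw [Real.log_mul (Real.exp_ne_zero _) (hdpos x).ne',
      Real.log_mul hlam_pos.ne' (hspos x).ne', Real.log_exp] at h1
    linarith
  have hatt : ∀ x, U x + KLdiv M hs x + Mcheck M hs V x
      = -Real.log (hs x) + -Real.log lam := by
    intro x
    have hcomb := combine M hhs_meas hae hhs_lb hhs_ub hVmeas hVb x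
    have hcompute :
        (∫ y, hs y / Mint M hs x * (Real.log (hs y) - Real.log (Mint M hs x) + V y) ∂(M x))
          = -Real.log (Mint M hs x) := by
      have heq : ∀ y, hs y / Mint M hs x * (Real.log (hs y) - Real.log (Mint M hs x) + V y)
          = -Real.log (Mint M hs x) / Mint M hs x * hs y := fun y => by
        simp only [hV]
        ring
      rw [integral_congr_ae (ae_of_all _ heq), integral_const_mul,
        show (∫ y, hs y ∂(M x)) = Mint M hs x from rfl]
      rw [div_mul_cancel₀ _ (hdpos x).ne']
    rw [add_assoc, hcomb, hcompute]
    linarith [hlogeig x]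
  have hlb : ∀ (h : X → ℝ), memH h → ∀ x,
      -Real.log (hs x) + -Real.log lam ≤ U x + KLdiv M h x + Mcheck M h V x := by
    rintro h ⟨hm, ⟨a, ha, hla⟩, ⟨b, hub⟩⟩ x
    have hcomb := combine M hm ha hla hub hVmeas hVb x
    have hgib := gibbs M hm ha hla hub hhs_meas hae hhs_lb hhs_ub x
    have heqi : (∫ y, h y / Mint M h x * (Real.log (h y) - Real.log (Mint M h x) + V y) ∂(M x))
        = ∫ y, h y / Mint M h x
            * (Real.log (h y) - Real.log (Mint M h x) - Real.log (hs y)) ∂(M x) := by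
      refine integral_congr_ae (ae_of_all _ fun y => ?_)
      simp only [hV]
      ring
    rw [add_assoc, hcomb, heqi]
    have := hlogeig x
    linarith [hgib]
  haveI : Nonempty {h : X → ℝ // memH h} := ⟨⟨hs, hmemhs⟩⟩
  refine ⟨?_, hmemhs, hatt, ?_⟩
  · intro x
    refine le_antisymm (le_ciInf fun h => hlb h.1 h.2 x) ?_
    have hbdd : BddBelow (Set.range fun h : {h : X → ℝ // memH h} =>
        U x + KLdiv M h.1 x + Mcheck M h.1 V x) :=
      ⟨-Real.log (hs x) + -Real.log lam, by rintro r ⟨h, rfl⟩; exact hlb h.1 h.2 x⟩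
    have h2 := ciInf_le hbdd (⟨hs, hmemhs⟩ : {h : X → ℝ // memH h})
    rwa [hatt x] at h2
  · intro x A hA
    simp only [Mcheck, Qop]
    have heq1 : ∀ y, hs y / Mint M hs x * A.indicator (fun _ => (1:ℝ)) y
        = (hs y * A.indicator (fun _ => (1:ℝ)) y) / Mint M hs x := fun y => by ring
    rw [integral_congr_ae (ae_of_all _ heq1), integral_div, ← heig x]
    rw [mul_div_mul_left _ _ (Real.exp_ne_zero (-U x))]
end
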